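/- arXiv:1711.06216 — 3 statements merged into one kernel-verified Lean document; each statement's English description precedes it below -/
import Mathlib

section
/- Let Ω be a finite set, p : Ω → (0,1), and let Ω_p be the random subset including each ω independently with probability p(ω). Let γ_1, …, γ_N be subsets of Ω, X_i the indicator that γ_i ⊆ Ω_p, and X = X_1 + ⋯ + X_N. Then P[X = 0] ≥ ∏_{i=1}^{N} (1 − E[X_i]). -/
open Finset

private lemma sum_mu_eq {Ω : Type*} [Fintype Ω] [DecidableEq Ω] (a b : Ω → ℝ) :
    ∑ S : Finset Ω, (∏ ω ∈ S, a ω) * ∏ ω ∈ Sᶜ, b ω = ∏ ω : Ω, (a ω + b ω) :=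
  (Fintype.prod_add a b).symm

private lemma key_harris {Ω ι : Type*} [Fintype Ω] [DecidableEq Ω]
    (μ : Finset Ω → ℝ) (hμ0 : ∀ S, 0 ≤ μ S) (hmass : ∑ S : Finset Ω, μ S = 1)
    (hlog : ∀ A B : Finset Ω, μ A * μ B ≤ μ (A ∩ B) * μ (A ∪ B))
    (s : Finset ι) (f : ι → Finset Ω → ℝ)
    (h0 : ∀ i S, 0 ≤ f i S) (h1 : ∀ i S, f i S ≤ 1)
    (hanti : ∀ i, Antitone (f i)) :
    ∏ i ∈ s, (∑ S : Finset Ω, μ S * f i S) ≤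
      ∑ S : Finset Ω, μ S * ∏ i ∈ s, f i S := by
  classical
  induction s using Finset.induction with
  | empty => simp [hmass]
  | @insert a s ha ih =>
    rw [Finset.prod_insert ha]
    have h1' : (∑ S : Finset Ω, μ S * f a S) * ∏ i ∈ s, (∑ S : Finset Ω, μ S * f i S)
        ≤ (∑ S : Finset Ω, μ S * f a S) * ∑ S : Finset Ω, μ S * ∏ i ∈ s, f i S := by
      apply mul_le_mul_of_nonneg_left ih
      exact Finset.sum_nonneg fun S _ => mul_nonneg (hμ0 S) (h0 a S)
    refine h1'.trans ?_
    -- apply FKG on the dual lattice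
    have hfkg := fkg (α := (Finset Ω)ᵒᵈ) (β := ℝ)
      (μ := fun S => μ (OrderDual.ofDual S))
      (f := fun S => f a (OrderDual.ofDual S))
      (g := fun S => ∏ i ∈ s, f i (OrderDual.ofDual S))
      (fun S => hμ0 _) (fun S => h0 _ _)
      (fun S => Finset.prod_nonneg fun i _ => h0 _ _)
      (fun A B hAB => hanti a hAB)
      (fun A B hAB => Finset.prod_le_prod (fun i _ => h0 _ _) (fun i _ => hanti i hAB))
      (fun A B => (hlog (OrderDual.ofDual A) (OrderDual.ofDual B)).trans_eq (mul_comm _ _))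
    calc (∑ S : Finset Ω, μ S * f a S) * ∑ S : Finset Ω, μ S * ∏ i ∈ s, f i S
        ≤ (∑ S : Finset Ω, μ S) * ∑ S : Finset Ω, μ S * (f a S * ∏ i ∈ s, f i S) := hfkg
      _ = ∑ S : Finset Ω, μ S * ∏ i ∈ insert a s, f i S := by
          rw [hmass, one_mul]
          exact Finset.sum_congr rfl fun S _ => by rw [Finset.prod_insert ha]

/-- Harris inequality consequence: the probability that the binomial random
subset `Ω_p` contains none of the sets `γ i` is at least
`∏ i (1 − E[X_i])`, where `E[X_i] = ∏_{ω ∈ γ i} p ω`. -/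
theorem prob_none_ge_prod {Ω : Type*} [Fintype Ω] [DecidableEq Ω]
    (p : Ω → ℝ) (hp : ∀ ω, 0 < p ω ∧ p ω < 1) {N : ℕ} (γ : Fin N → Finset Ω) :
    ∑ S ∈ Finset.univ.powerset.filter (fun S : Finset Ω => ∀ i, ¬ γ i ⊆ S),
        (∏ ω ∈ S, p ω) * ∏ ω ∈ Sᶜ, (1 - p ω)
      ≥ ∏ i : Fin N, (1 - ∏ ω ∈ γ i, p ω) := by
  classical
  set μ : Finset Ω → ℝ := fun S => (∏ ω ∈ S, p ω) * ∏ ω ∈ Sᶜ, (1 - p ω) with hμdef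
  have hμ0 : ∀ S, 0 ≤ μ S := fun S =>
    mul_nonneg (Finset.prod_nonneg fun ω _ => (hp ω).1.le)
      (Finset.prod_nonneg fun ω _ => by linarith [(hp ω).2])
  have hmass : ∑ S : Finset Ω, μ S = 1 := by
    rw [hμdef, sum_mu_eq]
    simp
  have hlog : ∀ A B : Finset Ω, μ A * μ B ≤ μ (A ∩ B) * μ (A ∪ B) := by
    intro A B
    have h1 : (∏ ω ∈ A, p ω) * ∏ ω ∈ B, p ω =
        (∏ ω ∈ A ∩ B, p ω) * ∏ ω ∈ A ∪ B, p ω := by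
      rw [mul_comm (∏ ω ∈ A ∩ B, p ω)]
      exact (Finset.prod_union_inter (s₁ := A) (s₂ := B) (f := p)).symm
    have h2 : (∏ ω ∈ Aᶜ, (1 - p ω)) * ∏ ω ∈ Bᶜ, (1 - p ω) =
        (∏ ω ∈ (A ∩ B)ᶜ, (1 - p ω)) * ∏ ω ∈ (A ∪ B)ᶜ, (1 - p ω) := by
      rw [Finset.compl_inter, Finset.compl_union]
      exact (Finset.prod_union_inter (s₁ := Aᶜ) (s₂ := Bᶜ) (f := fun ω => 1 - p ω)).symm
    simp only [hμdef]
    rw [mul_mul_mul_comm, h1, h2, mul_mul_mul_comm]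
  set f : Fin N → Finset Ω → ℝ := fun i S => if γ i ⊆ S then 0 else 1 with hfdef
  have hEi : ∀ i, ∑ S : Finset Ω, μ S * f i S = 1 - ∏ ω ∈ γ i, p ω := by
    intro i
    have hind : ∑ S : Finset Ω, μ S * (if γ i ⊆ S then 1 else 0) = ∏ ω ∈ γ i, p ω := by
      have : ∀ S : Finset Ω, μ S * (if γ i ⊆ S then 1 else 0) =
          (∏ ω ∈ S, p ω) * ∏ ω ∈ Sᶜ, (if ω ∈ γ i then 0 else 1 - p ω) := by
        intro S
        by_cases h : γ i ⊆ S
        · simp only [h, if_true, mul_one, hμdef]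
          congr 1
          refine Finset.prod_congr rfl fun ω hω => ?_
          rw [if_neg]
          intro hmem
          exact (Finset.mem_compl.mp hω) (h hmem)
        · simp only [h, if_false, mul_zero]
          obtain ⟨ω, hω1, hω2⟩ := Finset.not_subset.mp h
          rw [Finset.prod_eq_zero (Finset.mem_compl.mpr hω2) (by rw [if_pos hω1]), mul_zero]
      rw [Finset.sum_congr rfl fun S _ => this S, sum_mu_eq]
      rw [← Finset.prod_mul_prod_compl (γ i)]
      have hl : ∏ ω ∈ γ i, (p ω + if ω ∈ γ i then 0 else 1 - p ω) = ∏ ω ∈ γ i, p ω :=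
        Finset.prod_congr rfl fun ω hω => by rw [if_pos hω, add_zero]
      have hr : ∏ ω ∈ (γ i)ᶜ, (p ω + if ω ∈ γ i then 0 else 1 - p ω) = 1 := by
        refine Finset.prod_eq_one fun ω hω => ?_
        rw [if_neg (Finset.mem_compl.mp hω)]; ring
      rw [hl, hr, mul_one]
    have : ∀ S : Finset Ω, μ S * f i S = μ S - μ S * (if γ i ⊆ S then 1 else 0) := by
      intro S; simp only [hfdef]; by_cases h : γ i ⊆ S <;> simp [h]
    rw [Finset.sum_congr rfl fun S _ => this S, Finset.sum_sub_distrib, hmass, hind]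
  have hkey := key_harris μ hμ0 hmass hlog Finset.univ f
    (fun i S => by simp only [hfdef]; split <;> norm_num)
    (fun i S => by simp only [hfdef]; split <;> norm_num)
    (fun i A B hAB => by
      simp only [hfdef]
      by_cases h : γ i ⊆ A
      · simp [h, Finset.Subset.trans h hAB]
      · split <;> norm_num)
  rw [Finset.prod_congr rfl fun i _ => hEi i] at hkey
  refine le_trans hkey (le_of_eq ?_)
  rw [Finset.sum_filter]
  rw [Finset.powerset_univ]
  refine Finset.sum_congr rfl fun S _ => ?_
  by_cases h : ∀ i, ¬ γ i ⊆ S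
  · rw [if_pos h, Finset.prod_eq_one fun i _ => by simp [hfdef, h i], mul_one]
  · push_neg at h
    obtain ⟨i, hi⟩ := h
    rw [if_neg (by push_neg; exact ⟨i, hi⟩),
      Finset.prod_eq_zero (Finset.mem_univ i) (by simp [hfdef, hi]), mul_zero]
end

section
/- Let F be a 2-balanced graph with at least two edges, i.e., m_2(F) = (e_F − 1)/(v_F − 2) where m_2(F) = max{(e_H−1)/(v_H−2) : H ⊆ F, e_H > 1}. Then m_*(F) = m_2(F), where m_*(F) = min{(e_F − e_H)/(v_F − v_H) : H ⊆ F, v_H < v_F, e_H > 0}. -/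
open Finset

private lemma subgraph_finite {V : Type*} [Finite V] (F : SimpleGraph V) :
    Finite F.Subgraph := by
  have : Function.Injective (fun H : F.Subgraph => (H.verts, H.Adj)) := by
    intro a b h
    exact SimpleGraph.Subgraph.ext (congrArg Prod.fst h) (congrArg Prod.snd h)
  exact Finite.of_injective _ this

private lemma two_le_verts {V : Type*} [Fintype V] {F : SimpleGraph V} (H : F.Subgraph)
    (h : 0 < H.edgeSet.ncard) : 2 ≤ H.verts.ncard := by
  obtain ⟨e, he⟩ := Set.nonempty_of_ncard_ne_zero h.ne'
  induction e using Sym2.ind with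
  | _ u v =>
    rw [SimpleGraph.Subgraph.mem_edgeSet] at he
    have hsub : ({u, v} : Set V) ⊆ H.verts := by
      intro x hx
      rcases hx with rfl | rfl
      · exact H.edge_vert he
      · exact H.edge_vert he.symm
    calc 2 = ({u, v} : Set V).ncard := (Set.ncard_pair he.ne).symm
      _ ≤ H.verts.ncard := Set.ncard_le_ncard hsub (Set.toFinite _)

private lemma three_le_verts {V : Type*} [Fintype V] {F : SimpleGraph V} (H : F.Subgraph)
    (h : 1 < H.edgeSet.ncard) : 3 ≤ H.verts.ncard := by
  rw [Set.one_lt_ncard_iff (Set.toFinite _)] at h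
  obtain ⟨e₁, e₂, he₁, he₂, hne⟩ := h
  induction e₁ using Sym2.ind with
  | _ a b =>
    induction e₂ using Sym2.ind with
    | _ c d =>
      rw [SimpleGraph.Subgraph.mem_edgeSet] at he₁ he₂
      have hab : a ≠ b := he₁.ne
      have hcd : c ≠ d := he₂.ne
      have ha : a ∈ H.verts := H.edge_vert he₁
      have hb : b ∈ H.verts := H.edge_vert he₁.symm
      have hc : c ∈ H.verts := H.edge_vert he₂
      have hd : d ∈ H.verts := H.edge_vert he₂.symm
      have key : ∃ x ∈ H.verts, x ≠ a ∧ x ≠ b := by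
        by_cases hca : c = a
        · subst hca
          refine ⟨d, hd, ?_, ?_⟩
          · exact fun h' => hcd h'.symm
          · rintro rfl; exact hne rfl
        · by_cases hcb : c = b
          · subst hcb
            refine ⟨d, hd, ?_, ?_⟩
            · rintro rfl
              exact hne (Sym2.eq_swap)
            · exact fun h' => hcd h'.symm
          · exact ⟨c, hc, hca, hcb⟩
      obtain ⟨x, hx, hxa, hxb⟩ := key
      have hsub : ({x, a, b} : Set V) ⊆ H.verts := by
        intro y hy
        rcases hy with rfl | rfl | rfl <;> assumption
      have h3 : ({x, a, b} : Set V).ncard = 3 := by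
        rw [Set.ncard_insert_of_notMem (by simp [hxa, hxb]) (Set.toFinite _),
          Set.ncard_pair hab]
      calc 3 = ({x, a, b} : Set V).ncard := h3.symm
        _ ≤ H.verts.ncard := Set.ncard_le_ncard hsub (Set.toFinite _)

/-- For a 2-balanced graph `F` with at least two edges, `m_*(F) = m₂(F)`. -/
theorem mstar_eq_m2_of_two_balanced {V : Type*} [Fintype V] [DecidableEq V]
    (F : SimpleGraph V) [DecidableRel F.Adj]
    (he : 2 ≤ F.edgeFinset.card)
    (hbal : sSup {q : ℝ | ∃ H : F.Subgraph, 1 < H.edgeSet.ncard ∧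
        q = ((H.edgeSet.ncard : ℝ) - 1) / ((H.verts.ncard : ℝ) - 2)}
      = ((F.edgeFinset.card : ℝ) - 1) / ((Fintype.card V : ℝ) - 2)) :
    sInf {q : ℝ | ∃ H : F.Subgraph, H.verts.ncard < Fintype.card V ∧
        0 < H.edgeSet.ncard ∧
        q = ((F.edgeFinset.card : ℝ) - (H.edgeSet.ncard : ℝ)) /
          ((Fintype.card V : ℝ) - (H.verts.ncard : ℝ))}
      = ((F.edgeFinset.card : ℝ) - 1) / ((Fintype.card V : ℝ) - 2) := by
  haveI : Finite F.Subgraph := subgraph_finite F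
  set n := Fintype.card V with hn
  set m := F.edgeFinset.card with hm
  -- n ≥ 3
  have hn3 : 3 ≤ n := by
    by_contra h3
    push_neg at h3
    have hle : n ≤ 2 := by omega
    have h1 : m ≤ n.choose 2 := F.card_edgeFinset_le_card_choose_two
    have h2 : n.choose 2 ≤ Nat.choose 2 2 := Nat.choose_le_choose 2 hle
    simp [Nat.choose] at h2
    omega
  -- the set S
  set S : Set ℝ := {q : ℝ | ∃ H : F.Subgraph, H.verts.ncard < n ∧
        0 < H.edgeSet.ncard ∧
        q = ((m : ℝ) - (H.edgeSet.ncard : ℝ)) /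
          ((n : ℝ) - (H.verts.ncard : ℝ))} with hS
  -- S is finite
  have hSfin : S.Finite := by
    have : S ⊆ (fun H : F.Subgraph => ((m : ℝ) - (H.edgeSet.ncard : ℝ)) /
          ((n : ℝ) - (H.verts.ncard : ℝ))) '' Set.univ := by
      rintro q ⟨H, _, _, rfl⟩
      exact ⟨H, Set.mem_univ _, rfl⟩
    exact Set.Finite.subset (Set.toFinite _) this
  -- target value is in S (single edge subgraph)
  have hmem : ((m : ℝ) - 1) / ((n : ℝ) - 2) ∈ S := by
    have hne : F.edgeFinset.Nonempty := Finset.card_pos.mp (by omega)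
    obtain ⟨e, hee⟩ := hne
    rw [SimpleGraph.mem_edgeFinset] at hee
    induction e using Sym2.ind with
    | _ u v =>
      rw [SimpleGraph.mem_edgeSet] at hee
      refine ⟨F.subgraphOfAdj hee, ?_, ?_, ?_⟩
      · rw [SimpleGraph.subgraphOfAdj_verts, Set.ncard_pair hee.ne]
        omega
      · rw [SimpleGraph.edgeSet_subgraphOfAdj, Set.ncard_singleton]
        omega
      · rw [SimpleGraph.subgraphOfAdj_verts, Set.ncard_pair hee.ne,
          SimpleGraph.edgeSet_subgraphOfAdj, Set.ncard_singleton]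
        norm_num
  -- key bound: every element of S is at least the target
  have hlow : ∀ q ∈ S, ((m : ℝ) - 1) / ((n : ℝ) - 2) ≤ q := by
    rintro q ⟨H, hv, hepos, rfl⟩
    set a := H.verts.ncard with ha
    set b := H.edgeSet.ncard with hb
    have ha2 : 2 ≤ a := two_le_verts H hepos
    have hbm : b ≤ m := by
      have h1 := Set.ncard_le_ncard H.edgeSet_subset (Set.toFinite _)
      have h2 : F.edgeSet.ncard = m := by
        rw [hm, SimpleGraph.edgeFinset, Set.ncard_eq_toFinset_card']
      omega
    have hnN : (0 : ℝ) < (n : ℝ) - (a : ℝ) := by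
      have : (a : ℝ) < n := by exact_mod_cast hv
      linarith
    have hn2 : (0 : ℝ) < (n : ℝ) - 2 := by
      have : (3 : ℝ) ≤ n := by exact_mod_cast hn3
      linarith
    rw [div_le_div_iff₀ hn2 hnN]
    have hM1 : (0 : ℝ) ≤ (m : ℝ) - 1 := by
      have : (2 : ℝ) ≤ m := by exact_mod_cast he
      linarith
    rcases eq_or_lt_of_le (show 1 ≤ b from hepos) with hb1 | hb2
    · -- b = 1
      have : (b : ℝ) = 1 := by exact_mod_cast hb1.symm
      rw [this]
      have haR : (2 : ℝ) ≤ a := by exact_mod_cast ha2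
      nlinarith
    · -- b ≥ 2 : use balancedness
      have ha3 : 3 ≤ a := three_le_verts H hb2
      have hval : ((b : ℝ) - 1) / ((a : ℝ) - 2) ≤ ((m : ℝ) - 1) / ((n : ℝ) - 2) := by
        rw [← hbal]
        apply le_csSup
        · apply Set.Finite.bddAbove
          have : {q : ℝ | ∃ H : F.Subgraph, 1 < H.edgeSet.ncard ∧
              q = ((H.edgeSet.ncard : ℝ) - 1) / ((H.verts.ncard : ℝ) - 2)} ⊆
              (fun H : F.Subgraph => ((H.edgeSet.ncard : ℝ) - 1) /
                ((H.verts.ncard : ℝ) - 2)) '' Set.univ := by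
            rintro q ⟨K, _, rfl⟩
            exact ⟨K, Set.mem_univ _, rfl⟩
          exact Set.Finite.subset (Set.toFinite _) this
        · exact ⟨H, hb2, rfl⟩
      have ha2R : (0 : ℝ) < (a : ℝ) - 2 := by
        have : (3 : ℝ) ≤ a := by exact_mod_cast ha3
        linarith
      rw [div_le_div_iff₀ ha2R hn2] at hval
      nlinarith
  -- conclude
  refine le_antisymm (csInf_le (Set.Finite.bddBelow hSfin) hmem) (le_csInf ⟨_, hmem⟩ hlow)
end

section
/- Let W be a finite set, G a graph on a superset of W, and for each connected subset V ⊆ W with max V = max W (call the family of such 𝒞_W), let Π^C_V(W) denote the set of partitions π of W containing a part P ⊇ V such that V is a union of connected components of the induced subgraph G[P]. Then {Π^C_V(W) : V ∈ 𝒞_W} is a partition of the set Π(W) of all partitions of W. -/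
open SimpleGraph

private lemma reach_induce_iff (G : SimpleGraph ℕ) {s : Set ℕ} {u v : ℕ}
    (hu : u ∈ s) (hv : v ∈ s) :
    (G.induce s).Reachable ⟨u, hu⟩ ⟨v, hv⟩ ↔
      ∃ p : G.Walk u v, ∀ x ∈ p.support, x ∈ s := by
  constructor
  · rintro ⟨q⟩
    refine ⟨q.map (SimpleGraph.Embedding.induce s).toHom, ?_⟩
    intro x hx
    have hx' : x ∈ (q.map (SimpleGraph.Embedding.induce s).toHom).support := hx
    rw [SimpleGraph.Walk.support_map, List.mem_map] at hx'
    obtain ⟨y, _, rfl⟩ := hx'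
    exact y.2
  · rintro ⟨p, hp⟩
    have hc := p.connected_induce_support
    have h1 : u ∈ {x | x ∈ p.support} := p.start_mem_support
    have h2 : v ∈ {x | x ∈ p.support} := p.end_mem_support
    have hsub : {x | x ∈ p.support} ⊆ s := fun x hx => hp x hx
    exact (hc.preconnected ⟨u, h1⟩ ⟨v, h2⟩).map (G.induceHomOfLE hsub).toHom

/-- Every partition `π` of `W` lies in exactly one class `Π^C_V(W)`, where `V`
ranges over connected subsets of `W` containing (equivalently, with maximum
equal to) `max W`, and `π ∈ Π^C_V(W)` means that some part `P ∈ π` contains `V`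
and `V` is a union of connected components of the induced subgraph `G[P]`. -/
theorem partitions_classes_partition (G : SimpleGraph ℕ) (W : Finset ℕ)
    (hW : W.Nonempty) (π : Finpartition W) :
    ∃! V : Finset ℕ,
      (V ⊆ W ∧ W.max' hW ∈ V ∧ (G.induce (V : Set ℕ)).Connected) ∧
      (∃ P ∈ π.parts, V ⊆ P ∧
        ∀ (v w : (P : Set ℕ)), (v : ℕ) ∈ V →
          (G.induce (P : Set ℕ)).Reachable v w → (w : ℕ) ∈ V) := by
  classical
  set m := W.max' hW with hm
  obtain ⟨P, hP, hmP⟩ := π.exists_mem (W.max'_mem hW)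
  set V : Finset ℕ :=
    P.filter (fun v => ∃ p : G.Walk m v, ∀ x ∈ p.support, x ∈ (P : Set ℕ)) with hVdef
  have hmem : ∀ v, v ∈ V ↔ ∃ p : G.Walk m v, ∀ x ∈ p.support, x ∈ (P : Set ℕ) := by
    intro v
    rw [hVdef, Finset.mem_filter]
    constructor
    · rintro ⟨-, h⟩; exact h
    · rintro ⟨p, hp⟩
      exact ⟨hp v p.end_mem_support, p, hp⟩
  have hmV : m ∈ V := by
    rw [hmem]
    refine ⟨SimpleGraph.Walk.nil, ?_⟩
    intro x hx
    simp only [SimpleGraph.Walk.support_nil, List.mem_singleton] at hx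
    subst hx; exact hmP
  have hVP : V ⊆ P := by rw [hVdef]; exact Finset.filter_subset _ _
  have hVW : V ⊆ W := hVP.trans (π.le hP)
  -- every element of V is reachable from m by a walk whose support lies in V
  have hsuppV : ∀ v ∈ V, ∃ p : G.Walk m v, ∀ x ∈ p.support, x ∈ (V : Set ℕ) := by
    intro v hv
    obtain ⟨p, hp⟩ := (hmem v).1 hv
    refine ⟨p, fun x hx => ?_⟩
    rw [Finset.mem_coe, hmem]
    exact ⟨p.takeUntil x hx, fun y hy => hp y (p.support_takeUntil_subset hx hy)⟩
  have hconn : (G.induce (V : Set ℕ)).Connected := by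
    rw [connected_iff_exists_forall_reachable]
    refine ⟨⟨m, hmV⟩, ?_⟩
    rintro ⟨v, hv⟩
    obtain ⟨p, hp⟩ := hsuppV v hv
    exact (reach_induce_iff G (by exact hmV) hv).2 ⟨p, hp⟩
  have hclosed : ∀ (v w : (P : Set ℕ)), (v : ℕ) ∈ V →
      (G.induce (P : Set ℕ)).Reachable v w → (w : ℕ) ∈ V := by
    rintro ⟨v, hv⟩ ⟨w, hw⟩ hvV hr
    obtain ⟨p, hp⟩ := (hmem v).1 hvV
    obtain ⟨q, hq⟩ := (reach_induce_iff G hv hw).1 hr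
    rw [hmem]
    refine ⟨p.append q, fun x hx => ?_⟩
    rcases (SimpleGraph.Walk.mem_support_append_iff _ _).1 hx with h | h
    · exact hp x h
    · exact hq x h
  refine ⟨V, ⟨⟨hVW, hmV, hconn⟩, P, hP, hVP, hclosed⟩, ?_⟩
  rintro V' ⟨⟨hV'W, hmV', hconn'⟩, P', hP', hV'P', hclosed'⟩
  have hPP : P' = P := π.eq_of_mem_parts hP' hP (hV'P' hmV') hmP
  subst hPP
  apply Finset.Subset.antisymm
  · -- V' ⊆ V
    intro v hv
    have hvP : v ∈ (P' : Set ℕ) := hV'P' hv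
    have hmP' : m ∈ ((V' : Set ℕ)) := hmV'
    have hvV' : v ∈ ((V' : Set ℕ)) := hv
    obtain ⟨p, hp⟩ := (reach_induce_iff G hmP' hvV').1
      (hconn'.preconnected ⟨m, hmP'⟩ ⟨v, hvV'⟩)
    rw [hmem]
    exact ⟨p, fun x hx => hV'P' (hp x hx)⟩
  · -- V ⊆ V'
    intro v hv
    obtain ⟨p, hp⟩ := (hmem v).1 hv
    have hmPs : m ∈ (P' : Set ℕ) := hV'P' hmV'
    have hvPs : v ∈ (P' : Set ℕ) := hVP hv
    exact hclosed' ⟨m, hmPs⟩ ⟨v, hvPs⟩ hmV'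
      ((reach_induce_iff G hmPs hvPs).2 ⟨p, hp⟩)
end
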